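/- The enveloping group of the dihedral quandle R_{2n} is generated by the images a_0, a_1 of x_0, x_1 and has defining relations [a_0, a_1²] = [a_0², a_1] = [a_0, (a_0 a_1)^n] = [a_1, (a_0 a_1)^n] = 1; moreover the image of x_{2r+ε} (ε ∈ {0,1}, 0 ≤ r ≤ n−1) equals (a_0 a_1)^{-r} a_ε (a_0 a_1)^r. -/

import Mathlib

open Quandles
open scoped commutatorElement

/-- The image `a_k` of the element `x_k` of the dihedral quandle `R_{2n}`
in its enveloping group. -/
def dihedralGen (n : ℕ) (k : ℕ) : Rack.EnvelGroup (Quandle.Dihedral (2 * n)) :=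
  Rack.toEnvelGroup (Quandle.Dihedral (2 * n)) ((k : ZMod (2 * n)) : Quandle.Dihedral (2 * n))

set_option linter.unusedSectionVars false

namespace EnvelDihedralAux


variable (n : ℕ)

def gen (x : ZMod (2*n)) : Rack.EnvelGroup (Quandle.Dihedral (2*n)) :=
  Rack.toEnvelGroup (Quandle.Dihedral (2*n)) (x : Quandle.Dihedral (2*n))

lemma dihedralGen_eq (k : ℕ) : dihedralGen n k = gen n (k : ZMod (2*n)) := rfl

lemma gen_rel (x y : ZMod (2*n)) :
    gen n (2*x - y) = gen n x * gen n y * (gen n x)⁻¹ := by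
  have h := (Rack.toEnvelGroup (Quandle.Dihedral (2*n))).map_act (x := x) (y := y)
  rw [Quandle.conj_act_eq_conj] at h
  exact h.symm ▸ rfl

lemma conj_zero (x : ZMod (2*n)) : gen n 0 * gen n x * (gen n 0)⁻¹ = gen n (-x) := by
  have := gen_rel n 0 x; rw [mul_zero, zero_sub] at this; exact this.symm

lemma conj_one (x : ZMod (2*n)) : gen n 1 * gen n x * (gen n 1)⁻¹ = gen n (2 - x) := by
  have := gen_rel n 1 x; rw [mul_one] at this; exact this.symm

lemma conj_c (x : ZMod (2*n)) :
    (gen n 0 * gen n 1)⁻¹ * gen n x * (gen n 0 * gen n 1) = gen n (x + 2) := by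
  have h0 : (gen n 0)⁻¹ * gen n x * gen n 0 = gen n (-x) := by
    have := conj_zero n (-x); rw [neg_neg] at this
    rw [← this]; group
  have h1 : (gen n 1)⁻¹ * gen n (-x) * gen n 1 = gen n (2 + x) := by
    have := conj_one n (2 + x)
    rw [show (2 : ZMod (2*n)) - (2 + x) = -x by ring] at this
    rw [← this]; group
  calc (gen n 0 * gen n 1)⁻¹ * gen n x * (gen n 0 * gen n 1)
      = (gen n 1)⁻¹ * ((gen n 0)⁻¹ * gen n x * gen n 0) * gen n 1 := by group
    _ = (gen n 1)⁻¹ * gen n (-x) * gen n 1 := by rw [h0]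
    _ = gen n (2 + x) := h1
    _ = gen n (x + 2) := by rw [add_comm]

lemma conj_c_pow (r : ℕ) (x : ZMod (2*n)) :
    ((gen n 0 * gen n 1) ^ r)⁻¹ * gen n x * (gen n 0 * gen n 1) ^ r
      = gen n (x + 2 * r) := by
  induction r with
  | zero => simp
  | succ r ih =>
    have : ((gen n 0 * gen n 1) ^ (r+1))⁻¹ * gen n x * (gen n 0 * gen n 1) ^ (r+1)
        = (gen n 0 * gen n 1)⁻¹ *
            (((gen n 0 * gen n 1) ^ r)⁻¹ * gen n x * (gen n 0 * gen n 1) ^ r) *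
            (gen n 0 * gen n 1) := by
      rw [pow_succ]; group
    rw [this, ih, conj_c]
    congr 1
    push_cast
    ring

lemma dg0 : dihedralGen n 0 = gen n 0 := by rw [dihedralGen_eq, Nat.cast_zero]

lemma dg1 : dihedralGen n 1 = gen n 1 := by rw [dihedralGen_eq, Nat.cast_one]

lemma rel1 : ⁅dihedralGen n 0, (dihedralGen n 1) ^ 2⁆ = 1 := by
  rw [commutatorElement_eq_one_iff_commute, dg0, dg1]
  have h1 : gen n 1 * gen n 0 * (gen n 1)⁻¹ = gen n 2 := by
    have := conj_one n 0; rw [sub_zero] at this; exact this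
  have h2 : gen n 1 * gen n 2 * (gen n 1)⁻¹ = gen n 0 := by
    have := conj_one n 2; rw [sub_self] at this; exact this
  have key : (gen n 1) ^ 2 * gen n 0 * ((gen n 1) ^ 2)⁻¹ = gen n 0 := by
    calc (gen n 1) ^ 2 * gen n 0 * ((gen n 1) ^ 2)⁻¹
        = gen n 1 * (gen n 1 * gen n 0 * (gen n 1)⁻¹) * (gen n 1)⁻¹ := by
          rw [pow_two]; group
      _ = gen n 1 * gen n 2 * (gen n 1)⁻¹ := by rw [h1]
      _ = gen n 0 := h2
  rw [mul_inv_eq_iff_eq_mul] at key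
  exact key.symm

lemma rel2 : ⁅(dihedralGen n 0) ^ 2, dihedralGen n 1⁆ = 1 := by
  rw [commutatorElement_eq_one_iff_commute, dg0, dg1]
  have h1 : gen n 0 * gen n 1 * (gen n 0)⁻¹ = gen n (-1) := by
    have := conj_zero n 1; exact this
  have h2 : gen n 0 * gen n (-1) * (gen n 0)⁻¹ = gen n 1 := by
    have := conj_zero n (-1); rw [neg_neg] at this; exact this
  have key : (gen n 0) ^ 2 * gen n 1 * ((gen n 0) ^ 2)⁻¹ = gen n 1 := by
    calc (gen n 0) ^ 2 * gen n 1 * ((gen n 0) ^ 2)⁻¹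
        = gen n 0 * (gen n 0 * gen n 1 * (gen n 0)⁻¹) * (gen n 0)⁻¹ := by
          rw [pow_two]; group
      _ = gen n 0 * gen n (-1) * (gen n 0)⁻¹ := by rw [h1]
      _ = gen n 1 := h2
  rw [mul_inv_eq_iff_eq_mul] at key
  exact key

lemma rel_cn (ε : ZMod (2*n)) : Commute (gen n ε) ((gen n 0 * gen n 1) ^ n) := by
  have h := conj_c_pow n n ε
  have h2 : ε + 2 * (n : ZMod (2*n)) = ε := by
    have : ((2 * n : ℕ) : ZMod (2*n)) = 0 := ZMod.natCast_self _
    push_cast at this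
    rw [show (2 : ZMod (2*n)) * n = 0 from this, add_zero]
  rw [h2] at h
  rw [mul_assoc, inv_mul_eq_iff_eq_mul] at h
  exact h

lemma moreover (r ε : ℕ) :
    dihedralGen n (2 * r + ε)
      = ((dihedralGen n 0 * dihedralGen n 1) ^ r)⁻¹ * dihedralGen n ε *
          (dihedralGen n 0 * dihedralGen n 1) ^ r := by
  rw [dg0, dg1, dihedralGen_eq, dihedralGen_eq, conj_c_pow]
  congr 1
  push_cast
  ring

lemma closure_eq_top (hn : 0 < n) :
    Subgroup.closure {dihedralGen n 0, dihedralGen n 1} = ⊤ := by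
  haveI : NeZero (2*n) := ⟨by omega⟩
  rw [eq_top_iff]
  intro g _
  have hgen : ∀ x : ZMod (2*n),
      gen n x ∈ Subgroup.closure {dihedralGen n 0, dihedralGen n 1} := by
    intro x
    have hx : ((x.val : ℕ) : ZMod (2*n)) = x := ZMod.natCast_rightInverse x
    have hv : x.val = 2 * (x.val / 2) + x.val % 2 := by omega
    have h0 : dihedralGen n 0 ∈ Subgroup.closure {dihedralGen n 0, dihedralGen n 1} :=
      Subgroup.subset_closure (by left; rfl)
    have h1 : dihedralGen n 1 ∈ Subgroup.closure {dihedralGen n 0, dihedralGen n 1} :=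
      Subgroup.subset_closure (by right; rfl)
    have hε : dihedralGen n (x.val % 2) ∈
        Subgroup.closure {dihedralGen n 0, dihedralGen n 1} := by
      rcases Nat.mod_two_eq_zero_or_one x.val with h | h <;> rw [h]
      · exact h0
      · exact h1
    have : gen n x = dihedralGen n x.val := by rw [dihedralGen_eq, hx]
    rw [this, show dihedralGen n x.val = dihedralGen n (2*(x.val/2) + x.val%2) by
      rw [← hv], moreover]
    exact mul_mem (mul_mem (inv_mem (pow_mem (mul_mem h0 h1) _)) hε)
      (pow_mem (mul_mem h0 h1) _)
  have main : ∀ a : Rack.PreEnvelGroup (Quandle.Dihedral (2*n)),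
      (⟦a⟧ : Rack.EnvelGroup (Quandle.Dihedral (2*n))) ∈
        Subgroup.closure {dihedralGen n 0, dihedralGen n 1} := by
    intro a
    induction a with
    | unit => exact one_mem _
    | incl x => exact hgen x
    | mul a b iha ihb =>
      have hm : (⟦a.mul b⟧ : Rack.EnvelGroup (Quandle.Dihedral (2*n)))
          = @Mul.mul (Rack.EnvelGroup (Quandle.Dihedral (2*n))) _ ⟦a⟧ ⟦b⟧ := rfl
      rw [hm]
      exact mul_mem iha ihb
    | inv a iha =>
      have hm : (⟦a.inv⟧ : Rack.EnvelGroup (Quandle.Dihedral (2*n)))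
          = @Inv.inv (Rack.EnvelGroup (Quandle.Dihedral (2*n))) _ ⟦a⟧ := rfl
      rw [hm]
      exact inv_mem iha
  exact Quotient.inductionOn g main



section TargetSide
variable {H : Type} [Group H] (b₀ b₁ : H)

def FF (k : ℤ) : H :=
  (b₀ * b₁) ^ (-(k / 2)) * (if k % 2 = 0 then b₀ else b₁) * (b₀ * b₁) ^ (k / 2)

lemma FF_even (s : ℤ) : FF b₀ b₁ (2 * s) = (b₀*b₁) ^ (-s) * b₀ * (b₀*b₁) ^ s := by
  have e1 : 2 * s / 2 = s := by omega
  have e2 : 2 * s % 2 = 0 := by omega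
  rw [FF, e1, e2]; simp

lemma FF_odd (s : ℤ) : FF b₀ b₁ (2 * s + 1) = (b₀*b₁) ^ (-s) * b₁ * (b₀*b₁) ^ s := by
  have e1 : (2 * s + 1) / 2 = s := by omega
  have e2 : (2 * s + 1) % 2 = 1 := by omega
  rw [FF, e1, e2]; simp

lemma FF_shift (s m : ℤ) :
    FF b₀ b₁ (m + 2 * s) = (b₀*b₁) ^ (-s) * FF b₀ b₁ m * (b₀*b₁) ^ s := by
  have e1 : (m + 2 * s) / 2 = m / 2 + s := by omega
  have e2 : (m + 2 * s) % 2 = m % 2 := by omega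
  rw [FF, FF, e1, e2, neg_add, zpow_add, zpow_add]
  group

variable {b₀ b₁}
variable (h1 : Commute b₀ (b₁ ^ 2)) (h2 : Commute (b₀ ^ 2) b₁)

section
include h1 h2

lemma hz0 : Commute (b₀^2 * b₁^2) b₀ :=
  Commute.mul_left ((Commute.refl b₀).pow_left 2) h1.symm

lemma hz1 : Commute (b₀^2 * b₁^2) b₁ :=
  Commute.mul_left h2 ((Commute.refl b₁).pow_left 2)

lemma hzd : Commute (b₀^2 * b₁^2) (b₀ * b₁) :=
  (hz0 h1 h2).mul_right (hz1 h1 h2)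

lemma conj0_d : b₀ * (b₀ * b₁) * b₀⁻¹ = b₁ * b₀ := by
  have h := h2.eq
  rw [pow_two] at h
  calc b₀ * (b₀ * b₁) * b₀⁻¹ = (b₀ * b₀ * b₁) * b₀⁻¹ := by group
    _ = b₁ * (b₀ * b₀) * b₀⁻¹ := by rw [h]
    _ = b₁ * b₀ := by group

lemma dinv_z : (b₀ * b₁)⁻¹ * (b₀^2 * b₁^2) = b₁ * b₀ := by
  have h := h1.eq
  rw [pow_two] at h
  calc (b₀ * b₁)⁻¹ * (b₀^2 * b₁^2)
      = b₁⁻¹ * (b₀ * (b₁ * b₁)) * b₁ * b₁⁻¹ := by rw [pow_two, pow_two]; group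
    _ = b₁⁻¹ * (b₁ * b₁ * b₀) * b₁ * b₁⁻¹ := by rw [h]
    _ = b₁ * b₀ := by group

lemma conj0_dpow (s : ℤ) :
    b₀ * (b₀ * b₁) ^ s * b₀⁻¹ = (b₀*b₁) ^ (-s) * (b₀^2 * b₁^2) ^ s := by
  have key : b₀ * (b₀ * b₁) * b₀⁻¹ = (b₀*b₁)⁻¹ * (b₀^2 * b₁^2) := by
    rw [conj0_d h1 h2, dinv_z h1 h2]
  have hcomm : Commute ((b₀*b₁)⁻¹) (b₀^2 * b₁^2) := (hzd h1 h2).inv_right.symm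
  calc b₀ * (b₀ * b₁) ^ s * b₀⁻¹ = (b₀ * (b₀ * b₁) * b₀⁻¹) ^ s := (conj_zpow).symm
    _ = ((b₀*b₁)⁻¹ * (b₀^2 * b₁^2)) ^ s := by rw [key]
    _ = ((b₀*b₁)⁻¹) ^ s * (b₀^2 * b₁^2) ^ s := hcomm.mul_zpow s
    _ = (b₀*b₁) ^ (-s) * (b₀^2 * b₁^2) ^ s := by rw [inv_zpow, zpow_neg]

lemma conj1_dpow (s : ℤ) :
    b₁ * (b₀ * b₁) ^ s * b₁⁻¹ = (b₀*b₁) ^ (-s) * (b₀^2 * b₁^2) ^ s := by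
  have key : b₁ * (b₀ * b₁) * b₁⁻¹ = (b₀*b₁)⁻¹ * (b₀^2 * b₁^2) := by
    rw [dinv_z h1 h2]; group
  have hcomm : Commute ((b₀*b₁)⁻¹) (b₀^2 * b₁^2) := (hzd h1 h2).inv_right.symm
  calc b₁ * (b₀ * b₁) ^ s * b₁⁻¹ = (b₁ * (b₀ * b₁) * b₁⁻¹) ^ s := (conj_zpow).symm
    _ = ((b₀*b₁)⁻¹ * (b₀^2 * b₁^2)) ^ s := by rw [key]
    _ = ((b₀*b₁)⁻¹) ^ s * (b₀^2 * b₁^2) ^ s := hcomm.mul_zpow s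
    _ = (b₀*b₁) ^ (-s) * (b₀^2 * b₁^2) ^ s := by rw [inv_zpow, zpow_neg]

lemma sandwich (b x : H)
    (hb : ∀ s : ℤ, b * (b₀ * b₁) ^ s * b⁻¹ = (b₀*b₁) ^ (-s) * (b₀^2 * b₁^2) ^ s)
    (hzx : Commute (b₀^2 * b₁^2) (b * x * b⁻¹)) (s : ℤ) :
    b * ((b₀*b₁) ^ (-s) * x * (b₀*b₁) ^ s) * b⁻¹
      = (b₀*b₁) ^ s * (b * x * b⁻¹) * (b₀*b₁) ^ (-s) := by
  have e1 := hb (-s)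
  have e2 := hb s
  rw [neg_neg] at e1
  have hzd' : Commute ((b₀^2 * b₁^2) ^ (-s)) ((b₀*b₁) ^ (-s)) :=
    ((hzd h1 h2).zpow_zpow (-s) (-s))
  have hzx' : Commute ((b₀^2 * b₁^2) ^ (-s)) (b * x * b⁻¹) := hzx.zpow_left (-s)
  calc b * ((b₀*b₁) ^ (-s) * x * (b₀*b₁) ^ s) * b⁻¹
      = (b * (b₀*b₁) ^ (-s) * b⁻¹) * (b * x * b⁻¹) * (b * (b₀*b₁) ^ s * b⁻¹) := by group
    _ = ((b₀*b₁) ^ s * (b₀^2 * b₁^2) ^ (-s)) * (b * x * b⁻¹) *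
          ((b₀*b₁) ^ (-s) * (b₀^2 * b₁^2) ^ s) := by rw [e1, e2]
    _ = (b₀*b₁) ^ s * ((b₀^2 * b₁^2) ^ (-s) * (b * x * b⁻¹)) *
          ((b₀*b₁) ^ (-s) * (b₀^2 * b₁^2) ^ s) := by group
    _ = (b₀*b₁) ^ s * ((b * x * b⁻¹) * (b₀^2 * b₁^2) ^ (-s)) *
          ((b₀*b₁) ^ (-s) * (b₀^2 * b₁^2) ^ s) := by rw [hzx'.eq]
    _ = (b₀*b₁) ^ s * (b * x * b⁻¹) *
          (((b₀^2 * b₁^2) ^ (-s) * (b₀*b₁) ^ (-s)) * (b₀^2 * b₁^2) ^ s) := by group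
    _ = (b₀*b₁) ^ s * (b * x * b⁻¹) *
          (((b₀*b₁) ^ (-s) * (b₀^2 * b₁^2) ^ (-s)) * (b₀^2 * b₁^2) ^ s) := by rw [hzd'.eq]
    _ = (b₀*b₁) ^ s * (b * x * b⁻¹) * (b₀*b₁) ^ (-s) := by
          rw [mul_assoc ((b₀*b₁) ^ (-s)), ← zpow_add, neg_add_cancel, zpow_zero, mul_one]

lemma P3 (m : ℤ) : b₀ * FF b₀ b₁ m * b₀⁻¹ = FF b₀ b₁ (-m) := by
  obtain ⟨s, hs⟩ : ∃ s, m = 2*s ∨ m = 2*s+1 := ⟨m/2, by omega⟩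
  rcases hs with rfl | rfl
  · rw [FF_even, show -(2*s) = 2*(-s) by ring, FF_even,
      sandwich h1 h2 b₀ b₀ (conj0_dpow h1 h2)
        (by rw [show b₀*b₀*b₀⁻¹ = b₀ by group]; exact hz0 h1 h2)]
    group
  · rw [FF_odd, show -(2*s+1) = 2*(-(s+1))+1 by ring, FF_odd,
      sandwich h1 h2 b₀ b₁ (conj0_dpow h1 h2)
        (((hz0 h1 h2).mul_right (hz1 h1 h2)).mul_right (hz0 h1 h2).inv_right),
      neg_neg, zpow_add_one, show -(s+1) = -1 + -s by ring, zpow_add, zpow_neg_one]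
    group

lemma keyK : b₁ * b₀ * b₁⁻¹ = b₁⁻¹ * b₀ * b₁ := by
  have h := h1.eq
  rw [pow_two] at h
  calc b₁ * b₀ * b₁⁻¹ = b₁⁻¹ * (b₁ * b₁ * b₀) * b₁⁻¹ := by group
    _ = b₁⁻¹ * (b₀ * (b₁ * b₁)) * b₁⁻¹ := by rw [← h]
    _ = b₁⁻¹ * b₀ * b₁ := by group

lemma P4 (m : ℤ) : b₁ * FF b₀ b₁ m * b₁⁻¹ = FF b₀ b₁ (2 - m) := by
  obtain ⟨s, hs⟩ : ∃ s, m = 2*s ∨ m = 2*s+1 := ⟨m/2, by omega⟩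
  rcases hs with rfl | rfl
  · rw [FF_even, show (2 : ℤ) - 2*s = 2*(1-s) by ring, FF_even,
      sandwich h1 h2 b₁ b₀ (conj1_dpow h1 h2)
        (((hz1 h1 h2).mul_right (hz0 h1 h2)).mul_right (hz1 h1 h2).inv_right),
      keyK h1 h2]
    have e1 : (b₀*b₁)^((1:ℤ)-s) = (b₀*b₁) * (b₀*b₁)^(-s) := by
      rw [sub_eq_add_neg, zpow_add, zpow_one]
    have e2 : (b₀*b₁)^(-((1:ℤ)-s)) = (b₀*b₁)^s * (b₀*b₁)⁻¹ := by
      rw [neg_sub, sub_eq_add_neg, zpow_add, zpow_neg_one]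
    rw [e1, e2]
    group
    rw [e1]
    simp [mul_assoc]
  · rw [FF_odd, show (2 : ℤ) - (2*s+1) = 2*(-s)+1 by ring, FF_odd,
      sandwich h1 h2 b₁ b₁ (conj1_dpow h1 h2)
        (by rw [show b₁*b₁*b₁⁻¹ = b₁ by group]; exact hz1 h1 h2)]
    group

lemma Fconj (x y : ℤ) :
    FF b₀ b₁ (2*x - y) = FF b₀ b₁ x * FF b₀ b₁ y * (FF b₀ b₁ x)⁻¹ := by
  obtain ⟨s, hs⟩ : ∃ s, x = 2*s ∨ x = 2*s+1 := ⟨x/2, by omega⟩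
  rcases hs with rfl | rfl
  · rw [FF_even]
    have e1 : ((b₀*b₁)^(-s) * b₀ * (b₀*b₁)^s) * FF b₀ b₁ y *
          ((b₀*b₁)^(-s) * b₀ * (b₀*b₁)^s)⁻¹
        = (b₀*b₁)^(-s) * (b₀ * ((b₀*b₁)^(-(-s)) * FF b₀ b₁ y * (b₀*b₁)^(-s)) * b₀⁻¹) *
            (b₀*b₁)^s := by rw [neg_neg]; group
    rw [e1, ← FF_shift, P3 h1 h2,
      show -(y + 2*(-s)) = (2*(2*s) - y) + 2*(-s) by ring, FF_shift]
    group
  · rw [FF_odd]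
    have e1 : ((b₀*b₁)^(-s) * b₁ * (b₀*b₁)^s) * FF b₀ b₁ y *
          ((b₀*b₁)^(-s) * b₁ * (b₀*b₁)^s)⁻¹
        = (b₀*b₁)^(-s) * (b₁ * ((b₀*b₁)^(-(-s)) * FF b₀ b₁ y * (b₀*b₁)^(-s)) * b₁⁻¹) *
            (b₀*b₁)^s := by rw [neg_neg]; group
    rw [e1, ← FF_shift, P4 h1 h2,
      show 2 - (y + 2*(-s)) = (2*(2*s+1) - y) + 2*(-s) by ring, FF_shift]
    group

end

section Periodic
variable (n : ℕ)
variable (hc3 : Commute b₀ ((b₀ * b₁) ^ n)) (hc4 : Commute b₁ ((b₀ * b₁) ^ n))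

include hc3 hc4 in
lemma Fper (m : ℤ) : FF b₀ b₁ (m + 2 * (n : ℤ)) = FF b₀ b₁ m := by
  have hcomm : Commute ((b₀*b₁) ^ (n : ℤ)) (FF b₀ b₁ m) := by
    rw [FF]
    refine Commute.mul_right (Commute.mul_right ?_ ?_) ?_
    · exact (Commute.refl (b₀*b₁)).zpow_zpow _ _
    · split_ifs
      · rw [zpow_natCast]; exact hc3.symm
      · rw [zpow_natCast]; exact hc4.symm
    · exact (Commute.refl (b₀*b₁)).zpow_zpow _ _
  rw [FF_shift, mul_assoc, ← hcomm.eq, ← mul_assoc, zpow_neg, inv_mul_cancel, one_mul]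

include hc3 hc4 in
lemma FperT (t : ℤ) (m : ℤ) : FF b₀ b₁ (m + 2 * (n : ℤ) * t) = FF b₀ b₁ m := by
  induction t using Int.induction_on with
  | zero => simp
  | succ t ih =>
    rw [show m + 2*(n:ℤ)*(t+1) = (m + 2*(n:ℤ)*t) + 2*(n:ℤ) by ring,
      Fper n hc3 hc4, ih]
  | pred t ih =>
    have h := Fper n hc3 hc4 (m + 2*(n:ℤ)*(-(t:ℤ)-1))
    rw [show m + 2*(n:ℤ)*(-(t:ℤ)-1) + 2*(n:ℤ) = m + 2*(n:ℤ)*(-(t:ℤ)) by ring] at h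
    rw [h] at ih
    exact ih

include hc3 hc4 in
lemma FFcong (m j : ℤ) (h : ((m : ℤ) : ZMod (2*n)) = ((j : ℤ) : ZMod (2*n))) :
    FF b₀ b₁ m = FF b₀ b₁ j := by
  have hmod : m ≡ j [ZMOD (2*n : ℕ)] := (ZMod.intCast_eq_intCast_iff _ _ _).mp h
  obtain ⟨t, ht⟩ := Int.ModEq.dvd hmod
  have hj : j = m + 2*(n:ℤ)*t := by push_cast at ht; linarith
  rw [hj, FperT n hc3 hc4]

end Periodic
end TargetSide



variable {H : Type} [Group H] {b₀ b₁ : H}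

lemma univ (n : ℕ) (hn : 0 < n)
    (h1 : Commute b₀ (b₁ ^ 2)) (h2 : Commute (b₀ ^ 2) b₁)
    (hc3 : Commute b₀ ((b₀ * b₁) ^ n)) (hc4 : Commute b₁ ((b₀ * b₁) ^ n)) :
    ∃ φ : Rack.EnvelGroup (Quandle.Dihedral (2 * n)) →* H,
      (∀ x : ZMod (2*n),
        φ (Rack.toEnvelGroup (Quandle.Dihedral (2*n)) (x : Quandle.Dihedral (2*n)))
          = FF b₀ b₁ (x.val : ℤ)) := by
  haveI : NeZero (2*n) := ⟨by omega⟩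
  have key : ∀ a : ZMod (2*n), (((a.val : ℤ)) : ZMod (2*n)) = a := fun a => by
    rw [Int.cast_natCast]; exact ZMod.natCast_rightInverse a
  let f : Quandle.Dihedral (2*n) →◃ Quandle.Conj H :=
    { toFun := fun x => FF b₀ b₁ ((x : ZMod (2*n)).val : ℤ)
      map_act' := by
        intro x y
        let x' : ZMod (2*n) := x
        let y' : ZMod (2*n) := y
        rw [Quandle.conj_act_eq_conj]
        show FF b₀ b₁ (((2 * x' - y' : ZMod (2*n)).val : ℤ))
          = FF b₀ b₁ (x'.val : ℤ) * FF b₀ b₁ (y'.val : ℤ) * (FF b₀ b₁ (x'.val : ℤ))⁻¹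
        have hcast : ((((2 * x' - y' : ZMod (2*n)).val : ℤ)) : ZMod (2*n))
            = (((2 * (x'.val : ℤ) - (y'.val : ℤ)) : ℤ) : ZMod (2*n)) := by
          rw [key]
          push_cast
          rw [ZMod.natCast_rightInverse x', ZMod.natCast_rightInverse y']
        rw [FFcong n hc3 hc4 _ _ hcast, Fconj h1 h2] }
  exact ⟨Rack.toEnvelGroup.map f, fun x => rfl⟩


end EnvelDihedralAux

open EnvelDihedralAux in
/-- The enveloping group of the dihedral quandle `R_{2n}` is generated by the images
`a_0, a_1` of `x_0, x_1`, with defining relations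
`[a_0,a_1²] = [a_0²,a_1] = [a_0,(a_0a_1)^n] = [a_1,(a_0a_1)^n] = 1`
(defining: any group containing elements `b_0, b_1` satisfying these relations receives a
unique homomorphism sending `a_0 ↦ b_0`, `a_1 ↦ b_1`); moreover the image of `x_{2r+ε}`
(for `ε ∈ {0,1}`, `0 ≤ r ≤ n-1`) equals `(a_0a_1)^{-r} a_ε (a_0a_1)^r`. -/
theorem envelGroup_dihedral_presentation (n : ℕ) (hn : 0 < n) :
    Subgroup.closure {dihedralGen n 0, dihedralGen n 1} = ⊤ ∧
    ⁅dihedralGen n 0, (dihedralGen n 1) ^ 2⁆ = 1 ∧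
    ⁅(dihedralGen n 0) ^ 2, dihedralGen n 1⁆ = 1 ∧
    ⁅dihedralGen n 0, (dihedralGen n 0 * dihedralGen n 1) ^ n⁆ = 1 ∧
    ⁅dihedralGen n 1, (dihedralGen n 0 * dihedralGen n 1) ^ n⁆ = 1 ∧
    (∀ r ε : ℕ, r ≤ n - 1 → ε ≤ 1 →
      dihedralGen n (2 * r + ε)
        = ((dihedralGen n 0 * dihedralGen n 1) ^ r)⁻¹ * dihedralGen n ε *
            (dihedralGen n 0 * dihedralGen n 1) ^ r) ∧
    (∀ (H : Type) (_ : Group H) (b₀ b₁ : H),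
      ⁅b₀, b₁ ^ 2⁆ = 1 → ⁅b₀ ^ 2, b₁⁆ = 1 →
      ⁅b₀, (b₀ * b₁) ^ n⁆ = 1 → ⁅b₁, (b₀ * b₁) ^ n⁆ = 1 →
      ∃! φ : Rack.EnvelGroup (Quandle.Dihedral (2 * n)) →* H,
        φ (dihedralGen n 0) = b₀ ∧ φ (dihedralGen n 1) = b₁) := by
  haveI : NeZero (2 * n) := ⟨by omega⟩
  haveI : Fact (1 < 2 * n) := ⟨by omega⟩
  refine ⟨closure_eq_top n hn, rel1 n, rel2 n, ?_, ?_, fun r ε _ _ => moreover n r ε, ?_⟩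
  · rw [commutatorElement_eq_one_iff_commute, dg0, dg1]
    exact rel_cn n 0
  · rw [commutatorElement_eq_one_iff_commute, dg0, dg1]
    exact rel_cn n 1
  · intro H _ b₀ b₁ k1 k2 k3 k4
    rw [commutatorElement_eq_one_iff_commute] at k1 k2 k3 k4
    obtain ⟨φ, hφ⟩ := univ n hn k1 k2 k3 k4
    have hb0 : FF b₀ b₁ ((0 : ℤ)) = b₀ := by
      rw [show (0:ℤ) = 2*0 by ring, FF_even]; simp
    have hb1 : FF b₀ b₁ ((1 : ℤ)) = b₁ := by
      rw [show (1:ℤ) = 2*0+1 by ring, FF_odd]; simp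
    have hφ0 : φ (dihedralGen n 0) = b₀ := by
      have := hφ ((0 : ℕ) : ZMod (2*n))
      rw [show (((0:ℕ) : ZMod (2*n))) = 0 by norm_num, ZMod.val_zero] at this
      rw [show dihedralGen n 0
          = Rack.toEnvelGroup (Quandle.Dihedral (2*n))
              ((0 : ZMod (2*n)) : Quandle.Dihedral (2*n)) by
        rw [dihedralGen]; norm_num, this]
      exact_mod_cast hb0
    have hφ1 : φ (dihedralGen n 1) = b₁ := by
      have := hφ ((1 : ℕ) : ZMod (2*n))
      rw [show (((1:ℕ) : ZMod (2*n))) = 1 by norm_num, ZMod.val_one] at this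
      rw [show dihedralGen n 1
          = Rack.toEnvelGroup (Quandle.Dihedral (2*n))
              ((1 : ZMod (2*n)) : Quandle.Dihedral (2*n)) by
        rw [dihedralGen]; norm_num, this]
      exact_mod_cast hb1
    refine ⟨φ, ⟨hφ0, hφ1⟩, ?_⟩
    intro ψ ⟨e0, e1⟩
    refine MonoidHom.eq_of_eqOn_dense (closure_eq_top n hn) ?_
    intro g hg
    simp only [Set.mem_insert_iff, Set.mem_singleton_iff] at hg
    rcases hg with rfl | rfl
    · show ψ _ = φ _
      rw [e0, hφ0]
    · show ψ _ = φ _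
      rw [e1, hφ1]
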